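/- Let X be a normed space, X = X^u ⊕ X^{cs} with continuous projections P^u, P^{cs}, and let X_+ ⊆ X be a cone. Suppose there are η > 0 and a linear functional criterion such that every v ∈ X^{cs} satisfies ‖v⁻‖ ≥ η‖v‖ in a lattice norm, and let h^{cs} : X^{cs} → X^u satisfy ‖h^{cs}(w)‖ ≤ (η/2)‖w‖ for ‖w‖ ≤ δ. Then any v ≥ 0 of the form v = w + h^{cs}(w) with ‖w‖ = ‖P^{cs}v‖ ≤ δ must satisfy v = 0. -/

import Mathlib

theorem stmt_16 {X : Type*} [NormedAddCommGroup X] [Lattice X] [IsOrderedAddMonoid X] [HasSolidNorm X] [NormedSpace ℝ X]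
    (Xcs : Submodule ℝ X) (Pu Pcs : X →L[ℝ] X)
    (hsplit : ∀ x : X, Pu x + Pcs x = x)
    (hrange : ∀ x : X, Pcs x ∈ Xcs)
    (η δ : ℝ) (hη : 0 < η) (hδ : 0 < δ)
    (hneg : ∀ v : X, v ∈ Xcs → η * ‖v‖ ≤ ‖v⁻‖)
    (hcs : X → X) (hcs0 : hcs 0 = 0)
    (hsmall : ∀ w : X, ‖w‖ ≤ δ → ‖hcs w‖ ≤ (η/2) * ‖w‖) :
    ∀ v w : X, w ∈ Xcs → v = w + hcs w → Pcs v = w → 0 ≤ v → ‖w‖ ≤ δ → v = 0 := by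
  intro v w hw hv hPcs hv0 hwδ
  -- w = v + (- hcs w)
  have hwv : w = v + (-(hcs w)) := by rw [hv]; abel
  -- negative part bound: w⁻ ≤ v⁻ + (hcs w)⁺ = (hcs w)⁺
  have hle : w⁻ ≤ (hcs w)⁺ := by
    have h1 : (v + (-(hcs w)))⁻ ≤ v⁻ + (-(hcs w))⁻ := by
      rw [negPart_def, neg_add]
      exact sup_le (add_le_add (neg_le_negPart v) (neg_le_negPart (-(hcs w))))
        (add_nonneg (negPart_nonneg v) (negPart_nonneg (-(hcs w))))
    rw [← hwv] at h1
    simpa [negPart_eq_zero.mpr hv0, negPart_neg] using h1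
  have hpa : (hcs w)⁺ ≤ |hcs w| := by
    rw [posPart_def]; exact sup_le (le_abs_self _) (abs_nonneg _)
  have habs : |w⁻| ≤ |hcs w| := by
    rw [abs_of_nonneg (negPart_nonneg w)]
    exact hle.trans hpa
  have hnorm : ‖w⁻‖ ≤ ‖hcs w‖ := norm_le_norm_of_abs_le_abs habs
  have : η * ‖w‖ ≤ (η/2) * ‖w‖ :=
    le_trans (hneg w hw) (hnorm.trans (hsmall w hwδ))
  have hw0 : ‖w‖ = 0 := by nlinarith [norm_nonneg w]
  have : w = 0 := norm_eq_zero.mp hw0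
  rw [hv, this, hcs0, add_zero]
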